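/- Let M ≥ 2, ρ ∈ ℝ with 1 + (M−1)ρ > 0, κ ≥ 0, η > 0, ϱ > 0, and set δ = M(1 + (M−1)ρ) and a = √(Mκ/(1 + (M−1)ρ)). Let ς_1,…,ς_{2(M−1)}, ω_1, ω_2 be independent standard Gaussian random variables, and define ξ⁰_SA = (ηϱ/(2M(1+κ)))·[(1−ρ)·Σ_{i=1}^{2(M−1)} ς_i² + (1+(M−1)ρ)·Σ_{i=1}^{2} (ω_i + a)²]. Then E[ξ⁰_SA] = ηϱ and Var[ξ⁰_SA] = (ηϱ)²·((M + 2κδ)M² − 2δM(1+κ) + δ²)/(M³(M−1)(1+κ)²). -/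

import Mathlib

open MeasureTheory ProbabilityTheory Finset

section SAauxsec
open Real Set

namespace SAaux

lemma pdf_eq (x : ℝ) : gaussianPDFReal 0 1 x
    = (Real.sqrt (2 * π))⁻¹ * Real.exp (-(1/2) * x ^ 2) := by
  rw [gaussianPDFReal]
  norm_num [Real.exp_eq_exp]
  left; ring

lemma integral_stdG (f : ℝ → ℝ) :
    ∫ x, f x ∂(gaussianReal 0 1) = ∫ x, gaussianPDFReal 0 1 x * f x := by
  rw [gaussianReal_of_var_ne_zero 0 one_ne_zero]
  have h : gaussianPDF 0 1 = fun x => ((Real.toNNReal (gaussianPDFReal 0 1 x) : NNReal) : ENNReal) := rfl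
  rw [h, integral_withDensity_eq_integral_smul ((measurable_gaussianPDFReal 0 1).real_toNNReal)]
  congr 1
  ext x
  simp [NNReal.smul_def, Real.coe_toNNReal _ (gaussianPDFReal_nonneg 0 1 x)]

lemma integrable_stdG_iff (f : ℝ → ℝ) :
    Integrable f (gaussianReal 0 1) ↔
      Integrable (fun x => gaussianPDFReal 0 1 x * f x) volume := by
  rw [gaussianReal_of_var_ne_zero 0 one_ne_zero]
  have h : gaussianPDF 0 1 = fun x => ((Real.toNNReal (gaussianPDFReal 0 1 x) : NNReal) : ENNReal) := rfl
  rw [h, integrable_withDensity_iff_integrable_smul ((measurable_gaussianPDFReal 0 1).real_toNNReal)]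
  constructor <;> intro hh <;> refine hh.congr (Filter.Eventually.of_forall fun x => ?_) <;>
    simp [NNReal.smul_def, Real.coe_toNNReal _ (gaussianPDFReal_nonneg 0 1 x)]

lemma integrable_poly_exp (n : ℕ) :
    Integrable (fun x : ℝ => x ^ n * Real.exp (-(1/2) * x^2)) volume := by
  have h := integrable_rpow_mul_exp_neg_mul_sq (b := 1/2) (by norm_num) (s := (n:ℝ)) (lt_of_lt_of_le (by norm_num) (Nat.cast_nonneg n))
  refine h.congr (Filter.Eventually.of_forall fun x => ?_)
  simp [Real.rpow_natCast]

lemma GInt (n : ℕ) : Integrable (fun x : ℝ => x ^ n) (gaussianReal 0 1) := by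
  rw [integrable_stdG_iff]
  have := (integrable_poly_exp n).const_mul (Real.sqrt (2 * π))⁻¹
  refine this.congr (Filter.Eventually.of_forall fun x => ?_)
  simp only [pdf_eq]; ring

lemma odd_vanish {f : ℝ → ℝ} (h : ∀ x, f (-x) = - f x) : ∫ x, f x = 0 := by
  have h1 : ∫ x, f (-x) = ∫ x, f x := integral_neg_eq_self f volume
  have h2 : ∫ x, f (-x) = - ∫ x, f x := by
    simp_rw [h]; exact integral_neg f
  linarith


lemma integral_Ioi_pow_exp (n : ℕ) :
    ∫ x in Ioi (0:ℝ), x ^ n * Real.exp (-(1/2) * x^2)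
      = (1/2:ℝ) ^ (-(((n:ℝ))+1)/2) * (1/2) * Real.Gamma (((n:ℝ)+1)/2) := by
  rw [← integral_rpow_mul_exp_neg_mul_rpow (p := 2) (q := (n:ℝ)) (b := 1/2) two_pos
    (lt_of_lt_of_le (by norm_num) (Nat.cast_nonneg n)) (by norm_num)]
  refine setIntegral_congr_fun measurableSet_Ioi fun x hx => ?_
  rw [Real.rpow_natCast, show ((2:ℝ)) = ((2:ℕ):ℝ) by norm_num, Real.rpow_natCast]

lemma even_split {f : ℝ → ℝ} (h : ∀ x, f (-x) = f x) :
    ∫ x, f x = 2 * ∫ x in Ioi (0:ℝ), f x := by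
  rw [← integral_comp_abs (f := f)]
  congr 1
  ext x
  rcases abs_choice x with h1 | h1
  · rw [h1]
  · rw [h1, h]

lemma two_rpow_three_half : (2:ℝ) ^ ((3:ℝ)/2) = 2 * Real.sqrt 2 := by
  rw [show ((3:ℝ)/2) = 1 + 1/2 by norm_num, Real.rpow_add two_pos, Real.rpow_one,
    ← Real.sqrt_eq_rpow]

lemma two_rpow_five_half : (2:ℝ) ^ ((5:ℝ)/2) = 4 * Real.sqrt 2 := by
  rw [show ((5:ℝ)/2) = 2 + 1/2 by norm_num, Real.rpow_add two_pos,
    ← Real.sqrt_eq_rpow, show (2:ℝ) ^ (2:ℝ) = ((2:ℝ) ^ (2:ℕ) : ℝ) by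
      rw [← Real.rpow_natCast 2 2]; norm_num]
  norm_num

lemma half_rpow (y : ℝ) : (1/2:ℝ) ^ (-y) = (2:ℝ) ^ y := by
  rw [one_div, Real.inv_rpow (by norm_num : (0:ℝ) ≤ 2), Real.rpow_neg (by norm_num : (0:ℝ) ≤ 2),
    inv_inv]

lemma Gamma_three_half : Real.Gamma (3/2) = Real.sqrt π / 2 := by
  rw [show (3/2:ℝ) = 1/2 + 1 by norm_num, Real.Gamma_add_one (by norm_num),
    Real.Gamma_one_half_eq]
  ring

lemma Gamma_five_half : Real.Gamma (5/2) = 3 * Real.sqrt π / 4 := by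
  rw [show (5/2:ℝ) = 3/2 + 1 by norm_num, Real.Gamma_add_one (by norm_num),
    Gamma_three_half]
  ring

lemma sqrt_two_pi : Real.sqrt (2 * π) = Real.sqrt 2 * Real.sqrt π :=
  Real.sqrt_mul (by norm_num) π

lemma A2 : ∫ x : ℝ, x ^ 2 * Real.exp (-(1/2) * x^2) = Real.sqrt (2 * π) := by
  rw [even_split (fun x => by ring), integral_Ioi_pow_exp 2,
    show (-((((2:ℕ):ℝ))+1)/2) = -((3:ℝ)/2) by norm_num, half_rpow, two_rpow_three_half,
    show (((((2:ℕ):ℝ)))+1)/2 = (3/2:ℝ) by norm_num, Gamma_three_half, sqrt_two_pi]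
  ring

lemma A4 : ∫ x : ℝ, x ^ 4 * Real.exp (-(1/2) * x^2) = 3 * Real.sqrt (2 * π) := by
  rw [even_split (fun x => by ring), integral_Ioi_pow_exp 4,
    show (-((((4:ℕ):ℝ))+1)/2) = -((5:ℝ)/2) by norm_num, half_rpow, two_rpow_five_half,
    show (((((4:ℕ):ℝ)))+1)/2 = (5/2:ℝ) by norm_num, Gamma_five_half, sqrt_two_pi]
  ring


lemma pdf_even (x : ℝ) : gaussianPDFReal 0 1 (-x) = gaussianPDFReal 0 1 x := by
  rw [pdf_eq, pdf_eq, neg_sq]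

lemma Gm1 : ∫ x, x ∂(gaussianReal 0 1) = 0 := by
  rw [integral_stdG]
  exact odd_vanish (fun x => by rw [pdf_even]; ring)

lemma Gm3 : ∫ x, x ^ 3 ∂(gaussianReal 0 1) = 0 := by
  rw [integral_stdG]
  exact odd_vanish (fun x => by rw [pdf_even]; ring)

lemma sqrt_two_pi_ne : Real.sqrt (2 * π) ≠ 0 := by
  positivity

lemma Gm2 : ∫ x, x ^ 2 ∂(gaussianReal 0 1) = 1 := by
  rw [integral_stdG]
  have h : (fun x : ℝ => gaussianPDFReal 0 1 x * x ^ 2)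
      = fun x => (Real.sqrt (2 * π))⁻¹ * (x ^ 2 * Real.exp (-(1/2) * x^2)) :=
    funext fun x => by rw [pdf_eq]; ring
  rw [h, integral_const_mul, A2, inv_mul_cancel₀ sqrt_two_pi_ne]

lemma Gm4 : ∫ x, x ^ 4 ∂(gaussianReal 0 1) = 3 := by
  rw [integral_stdG]
  have h : (fun x : ℝ => gaussianPDFReal 0 1 x * x ^ 4)
      = fun x => (Real.sqrt (2 * π))⁻¹ * (x ^ 4 * Real.exp (-(1/2) * x^2)) :=
    funext fun x => by rw [pdf_eq]; ring
  rw [h, integral_const_mul, A4, ← mul_assoc, mul_comm (Real.sqrt (2 * π))⁻¹ 3, mul_assoc,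
    inv_mul_cancel₀ sqrt_two_pi_ne, mul_one]

lemma GInt1 : Integrable (fun x : ℝ => x) (gaussianReal 0 1) := by
  simpa using GInt 1

lemma Ge2 (b : ℝ) : ∫ x, (x + b) ^ 2 ∂(gaussianReal 0 1) = 1 + b ^ 2 := by
  have h : (fun x : ℝ => (x + b) ^ 2) = fun x => x ^ 2 + (2 * b * x + b ^ 2) :=
    funext fun x => by ring
  have i1 : Integrable (fun x : ℝ => 2 * b * x + b ^ 2) (gaussianReal 0 1) := by
    exact (GInt1.const_mul (2 * b)).add (integrable_const _)
  rw [h, integral_add (GInt 2) i1,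
    integral_add (GInt1.const_mul (2 * b)) (integrable_const _), integral_const_mul,
    Gm1, Gm2, integral_const]
  simp

lemma Gi2 (b : ℝ) : Integrable (fun x : ℝ => (x + b) ^ 2) (gaussianReal 0 1) := by
  have h : (fun x : ℝ => (x + b) ^ 2) = fun x => x ^ 2 + (2 * b * x + b ^ 2) :=
    funext fun x => by ring
  rw [h]
  exact (GInt 2).add ((GInt1.const_mul (2 * b)).add (integrable_const _))

lemma Ge4 (b : ℝ) : ∫ x, ((x + b) ^ 2) ^ 2 ∂(gaussianReal 0 1) = 3 + 6 * b ^ 2 + b ^ 4 := by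
  have h : (fun x : ℝ => ((x + b) ^ 2) ^ 2)
      = fun x => x ^ 4 + (4 * b * x ^ 3 + (6 * b ^ 2 * x ^ 2 + (4 * b ^ 3 * x + b ^ 4))) :=
    funext fun x => by ring
  have j1 : Integrable (fun x : ℝ => 4 * b ^ 3 * x + b ^ 4) (gaussianReal 0 1) := by
    exact (GInt1.const_mul _).add (integrable_const _)
  have j2 : Integrable (fun x : ℝ => 6 * b ^ 2 * x ^ 2 + (4 * b ^ 3 * x + b ^ 4))
      (gaussianReal 0 1) := by exact ((GInt 2).const_mul _).add j1
  have j3 : Integrable (fun x : ℝ => 4 * b * x ^ 3 + (6 * b ^ 2 * x ^ 2 + (4 * b ^ 3 * x + b ^ 4)))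
      (gaussianReal 0 1) := by exact ((GInt 3).const_mul _).add j2
  rw [h, integral_add (GInt 4) j3,
    integral_add ((GInt 3).const_mul _) j2,
    integral_add ((GInt 2).const_mul _) j1,
    integral_add (GInt1.const_mul _) (integrable_const _),
    integral_const_mul, integral_const_mul, integral_const_mul,
    Gm1, Gm2, Gm3, Gm4, integral_const]
  simp
  ring

lemma Gi4 (b : ℝ) : Integrable (fun x : ℝ => ((x + b) ^ 2) ^ 2) (gaussianReal 0 1) := by
  have h : (fun x : ℝ => ((x + b) ^ 2) ^ 2)
      = fun x => x ^ 4 + (4 * b * x ^ 3 + (6 * b ^ 2 * x ^ 2 + (4 * b ^ 3 * x + b ^ 4))) :=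
    funext fun x => by ring
  rw [h]
  exact (GInt 4).add (((GInt 3).const_mul _).add (((GInt 2).const_mul _).add
      ((GInt1.const_mul (4 * b ^ 3)).add (integrable_const _))))

lemma moment_helper {Ω : Type*} [MeasurableSpace Ω] (P : Measure Ω) [IsProbabilityMeasure P]
    {Y : Ω → ℝ} (hYm : Measurable Y) (hY : P.map Y = gaussianReal 0 1) (b : ℝ) :
    (∫ ω, (Y ω + b) ^ 2 ∂P = 1 + b ^ 2) ∧
    (∫ ω, ((Y ω + b) ^ 2) ^ 2 ∂P = 3 + 6 * b ^ 2 + b ^ 4) ∧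
    MemLp (fun ω => (Y ω + b) ^ 2) 2 P := by
  have hYae : AEMeasurable Y P := hYm.aemeasurable
  have hm2 : Measurable (fun x : ℝ => (x + b) ^ 2) := by fun_prop
  have hm4 : Measurable (fun x : ℝ => ((x + b) ^ 2) ^ 2) := by fun_prop
  have t2 : ∫ ω, (Y ω + b) ^ 2 ∂P = 1 + b ^ 2 := by
    rw [← Ge2 b, ← hY, integral_map hYae (hm2.aestronglyMeasurable)]
  have t4 : ∫ ω, ((Y ω + b) ^ 2) ^ 2 ∂P = 3 + 6 * b ^ 2 + b ^ 4 := by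
    rw [← Ge4 b, ← hY, integral_map hYae (hm4.aestronglyMeasurable)]
  refine ⟨t2, t4, ?_⟩
  rw [memLp_two_iff_integrable_sq (by fun_prop : Measurable fun ω => (Y ω + b) ^ 2).aestronglyMeasurable]
  have h4 : Integrable (fun x : ℝ => ((x + b) ^ 2) ^ 2) (P.map Y) := by rw [hY]; exact Gi4 b
  exact (integrable_map_measure hm4.aestronglyMeasurable hYae).mp h4

lemma var_helper {Ω : Type*} [MeasurableSpace Ω] (P : Measure Ω) [IsProbabilityMeasure P]
    {Y : Ω → ℝ} (hYm : Measurable Y) (hY : P.map Y = gaussianReal 0 1) (b : ℝ) :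
    variance (fun ω => (Y ω + b) ^ 2) P = 2 + 4 * b ^ 2 := by
  obtain ⟨e2, e4, hl⟩ := moment_helper P hYm hY b
  rw [variance_eq_sub hl]
  have h : ∫ ω, ((fun ω => (Y ω + b) ^ 2) ^ 2) ω ∂P = 3 + 6 * b ^ 2 + b ^ 4 := by
    simpa [pow_two, Pi.pow_apply] using e4
  rw [h, e2]
  ring

end SAaux


end SAauxsec

/-- With `M ≥ 2`, uniform correlation coefficient `ρ` satisfying
`1 + (M−1)ρ > 0`, Rician factor `κ ≥ 0`, `δ = M(1 + (M−1)ρ)` and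
`a = √(Mκ/(1 + (M−1)ρ))`, and `ς_1,…,ς_{2(M−1)}, ω_1, ω_2` independent standard
Gaussians, the Switching-Antennas harvested energy
`ξ⁰_SA = (ηϱ/(2M(1+κ)))[(1−ρ) Σ ς_i² + (1+(M−1)ρ) Σ (ω_i + a)²]`
has mean `ηϱ` and variance
`(ηϱ)²((M + 2κδ)M² − 2δM(1+κ) + δ²)/(M³(M−1)(1+κ)²)`. -/
theorem SA_mean_and_variance {Ω : Type*} [MeasurableSpace Ω]
    (P : Measure Ω) [IsProbabilityMeasure P]
    (M : ℕ) (hM : 2 ≤ M) (ρ κ : ℝ) (hρ : 0 < 1 + ((M : ℝ) - 1) * ρ) (hκ : 0 ≤ κ)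
    (η ϱ δ a : ℝ) (hη : 0 < η) (hϱ : 0 < ϱ)
    (hδ : δ = (M : ℝ) * (1 + ((M : ℝ) - 1) * ρ))
    (ha : a = Real.sqrt ((M : ℝ) * κ / (1 + ((M : ℝ) - 1) * ρ)))
    (g : (Fin (2 * (M - 1)) ⊕ Fin 2) → Ω → ℝ)
    (hmeas : ∀ k, Measurable (g k))
    (hindep : iIndepFun g P)
    (hgauss : ∀ k, P.map (g k) = gaussianReal 0 1)
    (ξ : Ω → ℝ)
    (hξ : ∀ ω, ξ ω = (η * ϱ / (2 * M * (1 + κ)))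
      * ((1 - ρ) * ∑ i : Fin (2 * (M - 1)), (g (Sum.inl i) ω) ^ 2
        + (1 + ((M : ℝ) - 1) * ρ) * ∑ i : Fin 2, (g (Sum.inr i) ω + a) ^ 2)) :
    ∫ ω, ξ ω ∂P = η * ϱ ∧
    variance ξ P = (η * ϱ) ^ 2
      * (((M : ℝ) + 2 * κ * δ) * (M : ℝ) ^ 2 - 2 * δ * M * (1 + κ) + δ ^ 2)
      / ((M : ℝ) ^ 3 * ((M : ℝ) - 1) * (1 + κ) ^ 2) := by
  have hM1 : (1:ℕ) ≤ M := le_trans (by norm_num) hM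
  have hMR : (2:ℝ) ≤ (M:ℝ) := by exact_mod_cast hM
  set t : ℝ := 1 + ((M : ℝ) - 1) * ρ with ht
  have ht0 : (0:ℝ) < t := hρ
  have hκ1 : (0:ℝ) < 1 + κ := by linarith
  have hM0 : (0:ℝ) < (M:ℝ) := by linarith
  have hMm1 : (0:ℝ) < (M:ℝ) - 1 := by linarith
  set c : ℝ := η * ϱ / (2 * M * (1 + κ)) with hc
  have ha2 : a ^ 2 = (M:ℝ) * κ / t := by
    rw [ha, Real.sq_sqrt (by positivity)]
  have hcast : ((2 * (M - 1) : ℕ) : ℝ) = 2 * ((M:ℝ) - 1) := by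
    push_cast [Nat.cast_sub hM1]
    ring
  -- coefficient and shift
  set C : (Fin (2 * (M - 1)) ⊕ Fin 2) → ℝ :=
    Sum.elim (fun _ => c * (1 - ρ)) (fun _ => c * t) with hC
  set B : (Fin (2 * (M - 1)) ⊕ Fin 2) → ℝ :=
    Sum.elim (fun _ => 0) (fun _ => a) with hB
  set φ : (Fin (2 * (M - 1)) ⊕ Fin 2) → ℝ → ℝ :=
    fun k => fun x => C k * (x + B k) ^ 2 with hφ
  have hφm : ∀ k, Measurable (φ k) := fun k => by fun_prop
  set X : (Fin (2 * (M - 1)) ⊕ Fin 2) → Ω → ℝ := fun k => φ k ∘ g k with hX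
  have hXindep : iIndepFun X P :=
    hindep.comp φ hφm
  have hξsum : ξ = fun ω => ∑ k, X k ω := by
    funext ω
    rw [hξ]
    simp only [hX, hφ, hC, hB, Function.comp_apply, Fintype.sum_sum_type, Sum.elim_inl,
      Sum.elim_inr, add_zero]
    rw [← Finset.mul_sum, ← Finset.mul_sum]
    ring
  have hmem : ∀ k, MemLp (X k) 2 P := fun k =>
    ((SAaux.moment_helper P (hmeas k) (hgauss k) (B k)).2.2).const_mul (C k)
  have hInt : ∀ k, Integrable (X k) P := fun k => (hmem k).integrable one_le_two
  have hmean : ∀ k, ∫ ω, X k ω ∂P = C k * (1 + (B k) ^ 2) := fun k => by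
    have h1 := (SAaux.moment_helper P (hmeas k) (hgauss k) (B k)).1
    simp only [hX, hφ, Function.comp_apply]
    rw [MeasureTheory.integral_const_mul, h1]
  have hvar : ∀ k, variance (X k) P = (C k) ^ 2 * (2 + 4 * (B k) ^ 2) := fun k => by
    have h1 := SAaux.var_helper P (hmeas k) (hgauss k) (B k)
    have h2 : X k = (C k) • (fun ω => (g k ω + B k) ^ 2) := rfl
    rw [h2, variance_smul, h1]
  -- mean
  have mean_eq : ∫ ω, ξ ω ∂P = η * ϱ := by
    rw [hξsum, integral_finset_sum univ (fun k _ => hInt k)]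
    simp only [hmean]
    rw [Fintype.sum_sum_type]
    simp only [hC, hB, Sum.elim_inl, Sum.elim_inr, Finset.sum_const, card_univ,
      Fintype.card_fin, nsmul_eq_mul]
    rw [hcast, ha2, hc]
    have h2M : (2:ℝ) * M * (1 + κ) ≠ 0 := by positivity
    field_simp
    ring
  refine ⟨mean_eq, ?_⟩
  -- variance
  have hsumfun : (fun ω => ∑ k, X k ω) = ∑ k, X k := by
    funext ω
    rw [Finset.sum_apply]
  have var_eq : variance ξ P = ∑ k, variance (X k) P := by
    rw [hξsum, hsumfun]
    exact IndepFun.variance_sum (fun k _ => hmem k)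
      (fun i _ j _ hij => hXindep.indepFun hij)
  rw [var_eq]
  simp only [hvar]
  rw [Fintype.sum_sum_type]
  simp only [hC, hB, Sum.elim_inl, Sum.elim_inr, Finset.sum_const, card_univ,
    Fintype.card_fin, nsmul_eq_mul]
  rw [hcast, ha2, hc, hδ]
  have htne : t ≠ 0 := ne_of_gt ht0
  have hMne : (M:ℝ) ≠ 0 := ne_of_gt hM0
  have hMm1ne : (M:ℝ) - 1 ≠ 0 := ne_of_gt hMm1
  have hκne : (1:ℝ) + κ ≠ 0 := ne_of_gt hκ1
  push_cast
  field_simp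
  ring
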